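/- Let a_n > 0 with a_n → ∞ and a_n/n → 0 as n → ∞, and fix an integer r ≥ 0. For the dynamic geometric distribution with parameter a_n, the quantity s²_{r,n} is asymptotically equivalent to 2 a_n (r+1) as n → ∞, i.e., s²_{r,n} / (2 a_n (r+1)) → 1. -/

import Mathlib

open MeasureTheory ProbabilityTheory Filter Topology
open scoped NNReal

noncomputable section

/-- pmf of the dynamic geometric distribution with parameter `a`:
`p_ℓ = (e^{1/a} - 1) e^{-ℓ/a}` for `ℓ = 1, 2, …` (letter `0` is not used). -/
def geomPMF (a : ℝ) (ℓ : ℕ) : ℝ :=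
  if ℓ = 0 then 0 else (Real.exp (1 / a) - 1) * Real.exp (-(ℓ : ℝ) / a)

/-- pmf of the fixed geometric distribution: `p_ℓ = p (1-p)^{ℓ-1}` for `ℓ = 1, 2, …`. -/
def fixedGeomPMF (p : ℝ) (ℓ : ℕ) : ℝ :=
  if ℓ = 0 then 0 else p * (1 - p) ^ (ℓ - 1)

/-- pmf of the dynamic discrete uniform distribution with parameter `γ` and sample size `n`:
`p_ℓ^{(n)} = 1/⌊n^γ⌋` for `ℓ = 1, …, ⌊n^γ⌋`. -/
def unifPMF (γ : ℝ) (n : ℕ) (ℓ : ℕ) : ℝ :=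
  if 1 ≤ ℓ ∧ ℓ ≤ ⌊(n : ℝ) ^ γ⌋₊ then (⌊(n : ℝ) ^ γ⌋₊ : ℝ)⁻¹ else 0

/-- pmf of the fixed discrete uniform distribution on `{1, …, K}`. -/
def fixedUnifPMF (K : ℕ) (ℓ : ℕ) : ℝ :=
  if 1 ≤ ℓ ∧ ℓ ≤ K then (K : ℝ)⁻¹ else 0

/-- `y_{ℓ,n}`: the number of times letter `ℓ` appears in the sample `ω`. -/
def occ {n : ℕ} (ω : Fin n → ℕ) (ℓ : ℕ) : ℕ :=
  (Finset.univ.filter fun i => ω i = ℓ).card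

/-- `N_{r,n}`: the number of letters appearing exactly `r` times in `ω` (valid for `r ≥ 1`). -/
def Ncount {n : ℕ} (ω : Fin n → ℕ) (r : ℕ) : ℕ :=
  ((Finset.univ.image ω).filter fun ℓ => occ ω ℓ = r).card

/-- `π_{r,n}`: the `r`-th occupancy probability. -/
def occProb {n : ℕ} (p : ℕ → ℝ) (ω : Fin n → ℕ) (r : ℕ) : ℝ :=
  ∑' ℓ : ℕ, p ℓ * (if occ ω ℓ = r then 1 else 0)

/-- `T_{r,n}`: Turing's estimator. -/
def turing {n : ℕ} (ω : Fin n → ℕ) (r : ℕ) : ℝ :=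
  ((r : ℝ) + 1) * (Ncount ω (r + 1) : ℝ) / (n : ℝ)

/-- `ŝ_{r,n} = sqrt((r+1)² N_{r+1,n} + (r+2)(r+1) N_{r+2,n})`. -/
def shat {n : ℕ} (ω : Fin n → ℕ) (r : ℕ) : ℝ :=
  Real.sqrt (((r : ℝ) + 1) ^ 2 * (Ncount ω (r + 1) : ℝ) +
    ((r : ℝ) + 2) * ((r : ℝ) + 1) * (Ncount ω (r + 2) : ℝ))

/-- the joint pmf of an i.i.d. sample of size `n` from the pmf `p`. -/
def jointPMF {n : ℕ} (p : ℕ → ℝ) (ω : Fin n → ℕ) : ℝ := ∏ i, p (ω i)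

/-- the normalized statistic `(n/ŝ_{r,n})(T_{r,n} - π_{r,n})`, interpreted as `0`
when `ŝ_{r,n} = 0` (which is automatic from Lean's convention `x / 0 = 0`). -/
def normStat {n : ℕ} (p : ℕ → ℝ) (ω : Fin n → ℕ) (r : ℕ) : ℝ :=
  (n : ℝ) / shat ω r * (turing ω r - occProb p ω r)

open scoped Classical in
/-- the statistic `T_{r,n} (n/ŝ_{r,n}) (T_{r,n}/π_{r,n} - 1)`, interpreted as `0` on the
event where `ŝ_{r,n} = 0` or `π_{r,n} = 0`. -/
def ratioStat {n : ℕ} (p : ℕ → ℝ) (ω : Fin n → ℕ) (r : ℕ) : ℝ :=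
  if shat ω r = 0 ∨ occProb p ω r = 0 then 0
  else turing ω r * ((n : ℝ) / shat ω r) * (turing ω r / occProb p ω r - 1)

/-- `s²_{r,n} = Σ_ℓ (r+1+n p_ℓ) e^{-n p_ℓ} (n p_ℓ)^{r+1} / r!`. -/
def s2 (p : ℕ → ℝ) (r n : ℕ) : ℝ :=
  ∑' ℓ : ℕ, ((r : ℝ) + 1 + (n : ℝ) * p ℓ) * Real.exp (-((n : ℝ) * p ℓ)) *
    ((n : ℝ) * p ℓ) ^ (r + 1) / (r.factorial : ℝ)

/-- `h_{n,η}(x) = e^{-n f_n(x)} (n f_n(x))^η` where `f_n(x) = (e^{1/a_n} - 1) e^{-x/a_n}`. -/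
def hfun (a : ℝ) (n : ℕ) (η : ℝ) (x : ℝ) : ℝ :=
  Real.exp (-((n : ℝ) * ((Real.exp (1 / a) - 1) * Real.exp (-x / a)))) *
    ((n : ℝ) * ((Real.exp (1 / a) - 1) * Real.exp (-x / a))) ^ η

namespace S2Aux
open intervalIntegral Set

/-- `h_k(x) = x^(k+1) e^{-x}` -/
def hh (k : ℕ) (x : ℝ) : ℝ := x ^ (k+1) * Real.exp (-x)
/-- integrand `g_k(x) = x^k e^{-x}` -/
def gg (k : ℕ) (x : ℝ) : ℝ := x ^ k * Real.exp (-x)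
/-- bound for `|h_k'|` -/
def bb (k : ℕ) (x : ℝ) : ℝ := ((k+1) * x ^ k + x ^ (k+1)) * Real.exp (-x)

lemma gg_cont (k : ℕ) : Continuous (gg k) := by
  unfold gg; continuity

lemma bb_cont (k : ℕ) : Continuous (bb k) := by
  unfold bb; continuity

lemma gg_nonneg (k : ℕ) {x : ℝ} (hx : 0 ≤ x) : 0 ≤ gg k x :=
  mul_nonneg (pow_nonneg hx _) (Real.exp_pos _).le

lemma bb_nonneg (k : ℕ) {x : ℝ} (hx : 0 ≤ x) : 0 ≤ bb k x := by
  apply mul_nonneg _ (Real.exp_pos _).le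
  positivity

lemma gg_integrableOn (k : ℕ) : IntegrableOn (gg k) (Ioi 0) := by
  have h := Real.GammaIntegral_convergent (s := (k:ℝ)+1) (by positivity)
  have : EqOn (fun x => Real.exp (-x) * x ^ ((k:ℝ)+1-1)) (gg k) (Ioi 0) := by
    intro x hx
    simp only [gg]
    rw [add_sub_cancel_right, Real.rpow_natCast, mul_comm]
  exact (h.congr_fun this measurableSet_Ioi)

lemma gg_integral (k : ℕ) : ∫ x in Ioi (0:ℝ), gg k x = k.factorial := by
  have h := Real.Gamma_eq_integral (s := (k:ℝ)+1) (by positivity)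
  rw [Real.Gamma_nat_eq_factorial] at h
  rw [h]
  symm
  apply setIntegral_congr_fun measurableSet_Ioi
  intro x hx
  simp only [gg]
  rw [add_sub_cancel_right, Real.rpow_natCast, mul_comm]

lemma hasDerivAt_hh (k : ℕ) (x : ℝ) :
    HasDerivAt (hh k) ((((k:ℝ)+1) * x ^ k - x ^ (k+1)) * Real.exp (-x)) x := by
  have h1 : HasDerivAt (fun x : ℝ => x ^ (k+1)) (((k:ℝ)+1) * x ^ k) x := by
    simpa using hasDerivAt_pow (k+1) x
  have h2 : HasDerivAt (fun x : ℝ => Real.exp (-x)) (-Real.exp (-x)) x := by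
    simpa using (hasDerivAt_neg x).exp
  have := h1.mul h2
  refine (show HasDerivAt (hh k) _ x from this).congr_deriv ?_
  ring


/-- increments of `hh` are bounded by the integral of `bb`. -/
lemma hh_increment (k : ℕ) {y z u : ℝ} (hy : 0 < y) (hyu : y ≤ u) (huz : u ≤ z) :
    |hh k u - hh k y| ≤ ∫ t in y..z, bb k t := by
  have hder : ∀ t ∈ uIcc y u, HasDerivAt (hh k)
      ((((k:ℝ)+1) * t ^ k - t ^ (k+1)) * Real.exp (-t)) t := fun t _ => hasDerivAt_hh k t
  have hint : IntervalIntegrable (fun t => (((k:ℝ)+1) * t ^ k - t ^ (k+1)) * Real.exp (-t))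
      volume y u := (Continuous.intervalIntegrable (by continuity) _ _)
  have heq := integral_eq_sub_of_hasDerivAt hder hint
  rw [← heq, ← Real.norm_eq_abs]
  calc ‖∫ t in y..u, (((k:ℝ)+1) * t ^ k - t ^ (k+1)) * Real.exp (-t)‖
      ≤ ∫ t in y..u, ‖(((k:ℝ)+1) * t ^ k - t ^ (k+1)) * Real.exp (-t)‖ :=
        norm_integral_le_integral_norm hyu
    _ ≤ ∫ t in y..u, bb k t := by
        apply integral_mono_on hyu
        · exact (Continuous.intervalIntegrable (by continuity) _ _)
        · exact (bb_cont k).intervalIntegrable _ _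
        · intro t ht
          have ht0 : 0 ≤ t := le_trans hy.le ht.1
          rw [norm_mul, Real.norm_eq_abs, Real.norm_eq_abs, Real.abs_exp]
          apply mul_le_mul_of_nonneg_right _ (Real.exp_pos _).le
          calc |((k:ℝ)+1) * t ^ k - t ^ (k+1)| ≤ |((k:ℝ)+1) * t ^ k| + |t ^ (k+1)| :=
                abs_sub _ _
            _ = ((k:ℝ)+1) * t ^ k + t ^ (k+1) := by
                rw [abs_of_nonneg (by positivity), abs_of_nonneg (by positivity)]
    _ ≤ ∫ t in y..z, bb k t := by
        rw [← integral_add_adjacent_intervals ((bb_cont k).intervalIntegrable y u)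
          ((bb_cont k).intervalIntegrable u z)]
        have : 0 ≤ ∫ t in u..z, bb k t := by
          apply integral_nonneg huz
          intro t ht
          exact bb_nonneg k (le_trans (le_trans hy.le hyu) ht.1)
        linarith

/-- Per-interval comparison: if `a (log z - log y) = 1` then
`|hh k y - a ∫_y^z gg k| ≤ ∫_y^z bb k`. -/
lemma interval_est (k : ℕ) {a y z : ℝ} (ha : 0 < a) (hy : 0 < y) (hyz : y ≤ z)
    (hlog : a * (Real.log z - Real.log y) = 1) :
    |hh k y - a * ∫ u in y..z, gg k u| ≤ ∫ u in y..z, bb k u := by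
  have hz : 0 < z := lt_of_lt_of_le hy hyz
  -- gg u = hh u / u on [y,z]
  have hinv_int : IntervalIntegrable (fun u : ℝ => u⁻¹) volume y z := by
    apply ContinuousOn.intervalIntegrable
    apply ContinuousOn.inv₀ continuousOn_id
    intro u hu
    rw [uIcc_of_le hyz] at hu
    exact ne_of_gt (lt_of_lt_of_le hy hu.1)
  have hinv : ∫ u in y..z, u⁻¹ = 1 / a := by
    rw [integral_inv_of_pos hy hz, Real.log_div hz.ne' hy.ne']
    field_simp at hlog ⊢
    linarith
  -- key rewrite: a * ∫ gg - hh y = a * ∫ (hh u - hh y)/u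
  have hgg_eq : ∀ u ∈ uIcc y z, gg k u = hh k u / u := by
    intro u hu
    rw [uIcc_of_le hyz] at hu
    have hu0 : 0 < u := lt_of_lt_of_le hy hu.1
    rw [eq_div_iff hu0.ne']
    simp only [gg, hh]
    ring
  have hcont_on : ContinuousOn (fun u : ℝ => (hh k u - hh k y) / u) (uIcc y z) := by
    apply ContinuousOn.div
    · exact (Continuous.continuousOn (by unfold hh; continuity))
    · exact continuousOn_id
    · intro u hu
      rw [uIcc_of_le hyz] at hu
      exact ne_of_gt (lt_of_lt_of_le hy hu.1)
  have hsplit : ∫ u in y..z, gg k u = (∫ u in y..z, (hh k u - hh k y) / u) + hh k y * ∫ u in y..z, u⁻¹ := by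
    rw [← intervalIntegral.integral_const_mul, ← integral_add (hcont_on.intervalIntegrable)
      ((hinv_int.const_mul _))]
    apply integral_congr
    intro u hu
    rw [hgg_eq u hu]
    have hu0 : (0:ℝ) < u := by
      rw [uIcc_of_le hyz] at hu; exact lt_of_lt_of_le hy hu.1
    field_simp
    ring
  have B := ∫ u in y..z, bb k u
  have hBnn : 0 ≤ ∫ u in y..z, bb k u :=
    integral_nonneg hyz (fun t ht => bb_nonneg k (le_trans hy.le ht.1))
  have hmain : hh k y - a * ∫ u in y..z, gg k u = -(a * ∫ u in y..z, (hh k u - hh k y) / u) := by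
    rw [hsplit, hinv]
    field_simp
    ring
  rw [hmain, abs_neg, abs_mul, abs_of_pos ha]
  -- |∫ (hh u - hh y)/u| ≤ B * ∫ u⁻¹ = B / a
  have hbnd : |∫ u in y..z, (hh k u - hh k y) / u| ≤ (∫ u in y..z, bb k u) * (1/a) := by
    rw [← Real.norm_eq_abs]
    calc ‖∫ u in y..z, (hh k u - hh k y) / u‖
        ≤ ∫ u in y..z, ‖(hh k u - hh k y) / u‖ := norm_integral_le_integral_norm hyz
      _ ≤ ∫ u in y..z, (∫ t in y..z, bb k t) * u⁻¹ := by
          apply integral_mono_on hyz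
          · exact (hcont_on.norm).intervalIntegrable
          · exact hinv_int.const_mul _
          · intro u hu
            have hu0 : 0 < u := lt_of_lt_of_le hy hu.1
            rw [norm_div, Real.norm_eq_abs, Real.norm_eq_abs, abs_of_pos hu0, div_eq_mul_inv]
            apply mul_le_mul_of_nonneg_right _ (inv_nonneg.mpr hu0.le)
            exact hh_increment k hy hu.1 hu.2
      _ = (∫ u in y..z, bb k u) * ∫ u in y..z, u⁻¹ := by rw [intervalIntegral.integral_const_mul]
      _ = (∫ u in y..z, bb k u) * (1/a) := by rw [hinv]
  calc a * |∫ u in y..z, (hh k u - hh k y) / u| ≤ a * ((∫ u in y..z, bb k u) * (1/a)) :=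
        mul_le_mul_of_nonneg_left hbnd ha.le
    _ = ∫ u in y..z, bb k u := by field_simp


/-- interval integral of a nonneg integrable function is at most the Ioi integral -/
lemma intervalIntegral_le_Ioi {f : ℝ → ℝ} (hf : IntegrableOn f (Ioi 0))
    (hnn : ∀ x ∈ Ioi (0:ℝ), 0 ≤ f x) {p q : ℝ} (hp : 0 ≤ p) (hpq : p ≤ q) :
    ∫ x in p..q, f x ≤ ∫ x in Ioi (0:ℝ), f x := by
  rw [integral_of_le hpq]
  apply setIntegral_mono_set hf
  · filter_upwards [ae_restrict_mem measurableSet_Ioi] with x hx using hnn x hx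
  · apply HasSubset.Subset.eventuallyLE
    intro x hx
    exact lt_of_le_of_lt hp hx.1

lemma bb_integrableOn (k : ℕ) : IntegrableOn (bb k) (Ioi 0) := by
  have : bb k = fun x => (k+1) * gg k x + gg (k+1) x := by
    funext x; simp only [bb, gg]; push_cast; ring
  rw [this]
  exact (((gg_integrableOn k).const_mul _).add (gg_integrableOn (k+1)))

lemma bb_integral (k : ℕ) : ∫ x in Ioi (0:ℝ), bb k x = 2 * (k+1).factorial := by
  have : ∀ x : ℝ, bb k x = (k+1) * gg k x + gg (k+1) x := by
    intro x; simp only [bb, gg]; push_cast; ring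
  rw [setIntegral_congr_fun measurableSet_Ioi (fun x _ => this x)]
  rw [integral_add ((gg_integrableOn k).const_mul _) (gg_integrableOn (k+1)),
    MeasureTheory.integral_const_mul, gg_integral, gg_integral]
  rw [Nat.factorial_succ]
  push_cast
  ring

lemma summable_hh (k : ℕ) {a c : ℝ} (ha : 0 < a) (hc : 0 < c) :
    Summable (fun i : ℕ => hh k (c * Real.exp (-((i:ℝ)+1)/a))) := by
  have hnn : ∀ i : ℕ, 0 ≤ hh k (c * Real.exp (-((i:ℝ)+1)/a)) :=
    fun i => mul_nonneg (pow_nonneg (by positivity) _) (Real.exp_pos _).le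
  have hle : ∀ i : ℕ, hh k (c * Real.exp (-((i:ℝ)+1)/a))
      ≤ c ^ (k+1) * (Real.exp (-((k:ℝ)+1)/a)) ^ i := by
    intro i
    have hx : (0:ℝ) < c * Real.exp (-((i:ℝ)+1)/a) := by positivity
    calc hh k (c * Real.exp (-((i:ℝ)+1)/a)) ≤ (c * Real.exp (-((i:ℝ)+1)/a)) ^ (k+1) := by
          rw [hh]
          nth_rewrite 2 [← mul_one ((c * Real.exp (-((i:ℝ)+1)/a)) ^ (k+1))]
          exact mul_le_mul_of_nonneg_left (Real.exp_le_one_iff.mpr (by linarith)) (by positivity)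
      _ = c ^ (k+1) * (Real.exp (-((i:ℝ)+1)/a)) ^ (k+1) := mul_pow _ _ _
      _ ≤ c ^ (k+1) * (Real.exp (-((k:ℝ)+1)/a)) ^ i := by
          apply mul_le_mul_of_nonneg_left _ (by positivity)
          rw [← Real.exp_nat_mul, ← Real.exp_nat_mul]
          apply Real.exp_le_exp.mpr
          rw [div_eq_mul_inv, div_eq_mul_inv]
          have hia : (0:ℝ) ≤ a⁻¹ := by positivity
          have hik : (i:ℝ) * (((k:ℝ)+1)) ≤ ((k:ℝ)+1) * ((i:ℝ)+1) := by
            nlinarith [Nat.cast_nonneg (α := ℝ) i, Nat.cast_nonneg (α := ℝ) k]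
          push_cast
          nlinarith
  refine Summable.of_nonneg_of_le hnn hle ?_
  apply Summable.mul_left
  apply summable_geometric_of_lt_one (Real.exp_pos _).le
  rw [Real.exp_lt_one_iff]
  have : (0:ℝ) < ((k:ℝ)+1)/a := by positivity
  rw [neg_div]
  linarith

/-- small integral of gg near zero -/
lemma gg_integral_small (k : ℕ) {y : ℝ} (hy : 0 ≤ y) :
    ∫ u in (0:ℝ)..y, gg k u ≤ y ^ (k+1) / (k+1) := by
  calc ∫ u in (0:ℝ)..y, gg k u ≤ ∫ u in (0:ℝ)..y, u ^ k := by
        apply integral_mono_on hy ((gg_cont k).intervalIntegrable _ _)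
          (Continuous.intervalIntegrable (by continuity) _ _)
        intro u hu
        rw [gg]
        nth_rewrite 2 [← mul_one (u ^ k)]
        exact mul_le_mul_of_nonneg_left (Real.exp_le_one_iff.mpr (by linarith [hu.1]))
          (pow_nonneg hu.1 _)
    _ = y ^ (k+1) / (k+1) := by rw [integral_pow]; norm_num

/-- THE key estimate -/
lemma key_est (k : ℕ) {a c : ℝ} (ha : 0 < a) (hc : 0 < c) :
    |(∑' i : ℕ, hh k (c * Real.exp (-((i:ℝ)+1)/a))) - a * ∫ u in (0:ℝ)..c, gg k u|
      ≤ 2 * (k+1).factorial := by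
  set x : ℕ → ℝ := fun i => c * Real.exp (-(i:ℝ)/a) with hxdef
  have hxpos : ∀ i, 0 < x i := fun i => by positivity
  have hxanti : ∀ i, x (i+1) ≤ x i := by
    intro i
    apply mul_le_mul_of_nonneg_left _ hc.le
    apply Real.exp_le_exp.mpr
    push_cast
    have : (0:ℝ) < a⁻¹ := by positivity
    rw [div_eq_mul_inv, div_eq_mul_inv]
    nlinarith [Nat.cast_nonneg (α := ℝ) i]
  have hx0 : x 0 = c := by simp [hxdef]
  have hlog : ∀ i : ℕ, a * (Real.log (x i) - Real.log (x (i+1))) = 1 := by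
    intro i
    have h1 : ∀ j : ℕ, Real.log (x j) = Real.log c + (-(j:ℝ)/a) := by
      intro j
      rw [hxdef]
      simp only
      rw [Real.log_mul hc.ne' (Real.exp_pos _).ne', Real.log_exp]
    rw [h1, h1]
    push_cast
    field_simp
    ring
  have hxle : ∀ N : ℕ, x N ≤ c := by
    intro N
    rw [← hx0]
    induction N with
    | zero => exact le_refl _
    | succ n ih => exact le_trans (hxanti n) ih
  have hperint : ∀ i : ℕ, |hh k (x (i+1)) - a * ∫ u in (x (i+1))..(x i), gg k u|
      ≤ ∫ u in (x (i+1))..(x i), bb k u :=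
    fun i => interval_est k ha (hxpos (i+1)) (hxanti i) (hlog i)
  -- partial sum estimate
  have hpartial : ∀ N : ℕ,
      |(∑ i ∈ Finset.range N, hh k (x (i+1))) - a * ∫ u in (x N)..c, gg k u|
        ≤ 2 * (k+1).factorial := by
    intro N
    have hsum_gg : ∑ i ∈ Finset.range N, ∫ u in (x (i+1))..(x i), gg k u
        = ∫ u in (x N)..c, gg k u := by
      have := sum_integral_adjacent_intervals (μ := volume) (f := gg k) (a := x) (n := N)
        (fun i _ => (gg_cont k).intervalIntegrable _ _)
      calc ∑ i ∈ Finset.range N, ∫ u in (x (i+1))..(x i), gg k u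
          = -∑ i ∈ Finset.range N, ∫ u in (x i)..(x (i+1)), gg k u := by
            rw [← Finset.sum_neg_distrib]
            exact Finset.sum_congr rfl (fun i _ => (integral_symm _ _))
        _ = -∫ u in (x 0)..(x N), gg k u := by rw [this]
        _ = ∫ u in (x N)..c, gg k u := by rw [← hx0, integral_symm, neg_neg]
    have hsum_bb : ∑ i ∈ Finset.range N, ∫ u in (x (i+1))..(x i), bb k u
        = ∫ u in (x N)..c, bb k u := by
      have := sum_integral_adjacent_intervals (μ := volume) (f := bb k) (a := x) (n := N)
        (fun i _ => (bb_cont k).intervalIntegrable _ _)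
      calc ∑ i ∈ Finset.range N, ∫ u in (x (i+1))..(x i), bb k u
          = -∑ i ∈ Finset.range N, ∫ u in (x i)..(x (i+1)), bb k u := by
            rw [← Finset.sum_neg_distrib]
            exact Finset.sum_congr rfl (fun i _ => (integral_symm _ _))
        _ = -∫ u in (x 0)..(x N), bb k u := by rw [this]
        _ = ∫ u in (x N)..c, bb k u := by rw [← hx0, integral_symm, neg_neg]
    have hxNle : x N ≤ c := hxle N
    calc |(∑ i ∈ Finset.range N, hh k (x (i+1))) - a * ∫ u in (x N)..c, gg k u|
        = |∑ i ∈ Finset.range N, (hh k (x (i+1)) - a * ∫ u in (x (i+1))..(x i), gg k u)| := by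
          rw [Finset.sum_sub_distrib, ← Finset.mul_sum, hsum_gg]
      _ ≤ ∑ i ∈ Finset.range N, |hh k (x (i+1)) - a * ∫ u in (x (i+1))..(x i), gg k u| :=
          Finset.abs_sum_le_sum_abs _ _
      _ ≤ ∑ i ∈ Finset.range N, ∫ u in (x (i+1))..(x i), bb k u :=
          Finset.sum_le_sum (fun i _ => hperint i)
      _ = ∫ u in (x N)..c, bb k u := hsum_bb
      _ ≤ ∫ u in Ioi (0:ℝ), bb k u :=
          intervalIntegral_le_Ioi (bb_integrableOn k) (fun u hu => bb_nonneg k hu.le)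
            (hxpos N).le hxNle
      _ = 2 * (k+1).factorial := bb_integral k
  -- limits
  have hxN0 : Tendsto (fun N : ℕ => x N) atTop (𝓝 0) := by
    rw [hxdef]
    have h1 : Tendsto (fun N : ℕ => -(N:ℝ)/a) atTop atBot := by
      apply Tendsto.atBot_div_const ha
      exact tendsto_neg_atBot_iff.mpr tendsto_natCast_atTop_atTop
    have h2 := Real.tendsto_exp_atBot.comp h1
    have := h2.const_mul c
    simpa using this
  have hInt0 : Tendsto (fun N : ℕ => ∫ u in (0:ℝ)..(x N), gg k u) atTop (𝓝 0) := by
    apply squeeze_zero (fun N => integral_nonneg (hxpos N).le (fun u hu => gg_nonneg k hu.1))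
      (fun N => gg_integral_small k (hxpos N).le)
    have : Tendsto (fun N : ℕ => (x N) ^ (k+1)) atTop (𝓝 0) := by
      have := hxN0.pow (k+1)
      simpa using this
    have := this.div_const ((k:ℝ)+1)
    simpa using this
  have hIntc : Tendsto (fun N : ℕ => a * ∫ u in (x N)..c, gg k u) atTop
      (𝓝 (a * ∫ u in (0:ℝ)..c, gg k u)) := by
    have heq : ∀ N, ∫ u in (x N)..c, gg k u
        = (∫ u in (0:ℝ)..c, gg k u) - ∫ u in (0:ℝ)..(x N), gg k u := by
      intro N
      rw [eq_sub_iff_add_eq, add_comm]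
      exact integral_add_adjacent_intervals ((gg_cont k).intervalIntegrable _ _)
        ((gg_cont k).intervalIntegrable _ _)
    simp only [heq]
    have := (tendsto_const_nhds (x := (∫ u in (0:ℝ)..c, gg k u)) (f := atTop (α := ℕ))).sub hInt0
    rw [sub_zero] at this
    exact this.const_mul a
  have hSum : Tendsto (fun N : ℕ => ∑ i ∈ Finset.range N, hh k (x (i+1))) atTop
      (𝓝 (∑' i : ℕ, hh k (c * Real.exp (-((i:ℝ)+1)/a)))) := by
    have hs := summable_hh k ha hc
    have heq : (fun i : ℕ => hh k (c * Real.exp (-((i:ℝ)+1)/a))) = fun i => hh k (x (i+1)) := by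
      funext i
      rw [hxdef]
      push_cast
      ring_nf
    rw [heq] at hs ⊢
    exact hs.hasSum.tendsto_sum_nat
  have habs : Tendsto (fun N : ℕ =>
      |(∑ i ∈ Finset.range N, hh k (x (i+1))) - a * ∫ u in (x N)..c, gg k u|) atTop
      (𝓝 |(∑' i : ℕ, hh k (c * Real.exp (-((i:ℝ)+1)/a))) - a * ∫ u in (0:ℝ)..c, gg k u|) :=
    (hSum.sub hIntc).abs
  exact le_of_tendsto habs (Eventually.of_forall hpartial)



/-- rewriting `s2` in terms of the sums `S_k`. -/
lemma s2_eq (r n : ℕ) {a : ℝ} (ha : 0 < a) (hn : 1 ≤ n) :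
    s2 (geomPMF a) r n =
      (((r:ℝ)+1) * (∑' i : ℕ, hh r (((n:ℝ) * (Real.exp (1/a) - 1)) * Real.exp (-((i:ℝ)+1)/a)))
        + (∑' i : ℕ, hh (r+1) (((n:ℝ) * (Real.exp (1/a) - 1)) * Real.exp (-((i:ℝ)+1)/a))))
      / (r.factorial : ℝ) := by
  set c := (n:ℝ) * (Real.exp (1/a) - 1) with hcdef
  have hexp1 : 0 < Real.exp (1/a) - 1 := by
    have h1 := Real.add_one_le_exp (1/a)
    have h2 : (0:ℝ) < 1/a := by positivity
    linarith
  have hc : 0 < c := by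
    have hn' : (0:ℝ) < n := by exact_mod_cast hn
    exact mul_pos hn' hexp1
  set f : ℕ → ℝ := fun ℓ => ((r : ℝ) + 1 + (n : ℝ) * geomPMF a ℓ) *
    Real.exp (-((n : ℝ) * geomPMF a ℓ)) * ((n : ℝ) * geomPMF a ℓ) ^ (r + 1) / (r.factorial : ℝ)
    with hfdef
  have hu : ∀ i : ℕ, (n:ℝ) * geomPMF a (i+1) = c * Real.exp (-((i:ℝ)+1)/a) := by
    intro i
    rw [geomPMF, if_neg (Nat.succ_ne_zero i), hcdef]
    push_cast
    ring
  have hf0 : f 0 = 0 := by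
    simp [hfdef, geomPMF]
  have hfs : ∀ i : ℕ, f (i+1) =
      (((r:ℝ)+1) * hh r (c * Real.exp (-((i:ℝ)+1)/a))
        + hh (r+1) (c * Real.exp (-((i:ℝ)+1)/a))) / (r.factorial : ℝ) := by
    intro i
    rw [hfdef]
    simp only
    rw [hu i, hh, hh]
    ring
  have hsum_r := summable_hh r ha hc
  have hsum_r1 := summable_hh (r+1) ha hc
  have hsucc : Summable (fun i : ℕ => f (i+1)) := by
    have : (fun i : ℕ => f (i+1)) = fun i : ℕ =>
        (((r:ℝ)+1) * hh r (c * Real.exp (-((i:ℝ)+1)/a))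
          + hh (r+1) (c * Real.exp (-((i:ℝ)+1)/a))) / (r.factorial : ℝ) := funext hfs
    rw [this]
    exact ((hsum_r.mul_left _).add hsum_r1).div_const _
  have hsumf : Summable f := (summable_nat_add_iff 1).mp hsucc
  calc s2 (geomPMF a) r n = ∑' ℓ, f ℓ := rfl
    _ = f 0 + ∑' i, f (i+1) := hsumf.tsum_eq_zero_add
    _ = ∑' i : ℕ, (((r:ℝ)+1) * hh r (c * Real.exp (-((i:ℝ)+1)/a))
          + hh (r+1) (c * Real.exp (-((i:ℝ)+1)/a))) / (r.factorial : ℝ) := by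
        rw [hf0, zero_add]
        exact tsum_congr hfs
    _ = (((r:ℝ)+1) * (∑' i : ℕ, hh r (c * Real.exp (-((i:ℝ)+1)/a)))
        + (∑' i : ℕ, hh (r+1) (c * Real.exp (-((i:ℝ)+1)/a)))) / (r.factorial : ℝ) := by
        rw [tsum_div_const, Summable.tsum_add (hsum_r.mul_left _) hsum_r1, tsum_mul_left]


end S2Aux

open S2Aux

/-- if `a_n > 0`, `a_n → ∞` and `a_n/n → 0`, then for the dynamic geometric
distribution with parameter `a_n` and any fixed `r ≥ 0`, `s²_{r,n} ∼ 2 a_n (r+1)`. -/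
theorem s2_asymptotic_dynamic_geometric (a : ℕ → ℝ) (ha : ∀ n, 0 < a n)
    (ha_top : Tendsto a atTop atTop)
    (ha_n : Tendsto (fun n : ℕ => a n / (n : ℝ)) atTop (𝓝 0)) (r : ℕ) :
    Tendsto (fun n : ℕ => s2 (geomPMF (a n)) r n / (2 * a n * ((r : ℝ) + 1)))
      atTop (𝓝 1) := by
  classical
  set c : ℕ → ℝ := fun n => (n:ℝ) * (Real.exp (1/(a n)) - 1) with hcdef
  have hexp1 : ∀ n, 0 < Real.exp (1/(a n)) - 1 := by
    intro n
    have h1 := Real.add_one_le_exp (1/(a n))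
    have h2 : (0:ℝ) < 1/(a n) := by have := ha n; positivity
    linarith
  have hcnn : ∀ n, 0 ≤ c n := fun n => mul_nonneg (Nat.cast_nonneg n) (hexp1 n).le
  have hcpos : ∀ n, 1 ≤ n → 0 < c n := by
    intro n hn
    have : (0:ℝ) < n := by exact_mod_cast hn
    exact mul_pos this (hexp1 n)
  have hctop : Tendsto c atTop atTop := by
    have hna : Tendsto (fun n : ℕ => (n:ℝ) / a n) atTop atTop := by
      have h1 : Tendsto (fun n : ℕ => a n / (n:ℝ)) atTop (𝓝[>] 0) := by
        apply tendsto_nhdsWithin_of_tendsto_nhds_of_eventually_within _ ha_n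
        filter_upwards [eventually_ge_atTop 1] with n hn
        have : (0:ℝ) < n := by exact_mod_cast hn
        exact div_pos (ha n) this
      have h2 : Tendsto (fun n : ℕ => (a n / (n:ℝ))⁻¹) atTop atTop := h1.inv_tendsto_nhdsGT_zero
      have h3 : (fun n : ℕ => (a n / (n:ℝ))⁻¹) = fun n : ℕ => (n:ℝ) / a n := by
        funext n; rw [inv_div]
      rwa [h3] at h2
    apply tendsto_atTop_mono' atTop _ hna
    filter_upwards with n
    have h1 := Real.add_one_le_exp (1/(a n))
    calc (n:ℝ) / a n = (n:ℝ) * (1 / a n) := by ring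
      _ ≤ (n:ℝ) * (Real.exp (1/(a n)) - 1) :=
          mul_le_mul_of_nonneg_left (by linarith) (Nat.cast_nonneg n)
      _ = c n := by rw [hcdef]
  set τ : ℕ → ℕ → ℝ := fun k n => (k.factorial:ℝ) - ∫ u in (0:ℝ)..(c n), gg k u with hτdef
  have hτ0 : ∀ k, Tendsto (fun n => τ k n) atTop (𝓝 0) := by
    intro k
    have h1 := intervalIntegral_tendsto_integral_Ioi 0 (gg_integrableOn k) hctop
    rw [gg_integral] at h1
    have h2 := (tendsto_const_nhds (x := ((k.factorial:ℝ))) (f := atTop (α := ℕ))).sub h1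
    rw [sub_self] at h2
    exact h2
  have hτnn : ∀ k n, 0 ≤ τ k n := by
    intro k n
    have h := intervalIntegral_le_Ioi (gg_integrableOn k) (fun u hu => gg_nonneg k hu.le)
      (le_refl 0) (hcnn n)
    rw [gg_integral] at h
    simp only [hτdef]
    linarith
  set S : ℕ → ℕ → ℝ := fun k n => ∑' i : ℕ, hh k (c n * Real.exp (-((i:ℝ)+1)/(a n))) with hSdef
  have hSbound : ∀ k n, 1 ≤ n → |S k n - a n * k.factorial| ≤ 2*(k+1).factorial + a n * τ k n := by
    intro k n hn
    have h1 := key_est k (ha n) (hcpos n hn)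
    have h2 : |a n * (∫ u in (0:ℝ)..(c n), gg k u) - a n * k.factorial| = a n * τ k n := by
      have h3 := hτnn k n
      simp only [hτdef] at h3
      rw [← mul_sub, abs_mul, abs_of_pos (ha n)]
      congr 1
      rw [abs_of_nonpos (by linarith)]
      simp only [hτdef]
      ring
    calc |S k n - a n * k.factorial|
        ≤ |S k n - a n * ∫ u in (0:ℝ)..(c n), gg k u|
          + |a n * (∫ u in (0:ℝ)..(c n), gg k u) - a n * k.factorial| := abs_sub_le _ _ _
      _ ≤ 2*(k+1).factorial + a n * τ k n := by
          rw [h2]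
          exact add_le_add_left h1 _
  set D : ℕ → ℝ := fun n => 2 * a n * ((r:ℝ)+1) with hDdef
  have hDpos : ∀ n, 0 < D n := by
    intro n
    have := ha n
    simp only [hDdef]
    positivity
  have hfacpos : (0:ℝ) < r.factorial := by exact_mod_cast r.factorial_pos
  set C1 : ℝ := (((r:ℝ)+1) * (2*(r+2).factorial) + 2*(r+1+1+1).factorial)
    / (r.factorial * (2 * ((r:ℝ)+1))) with hC1
  set C2 : ℝ := 1 / (r.factorial * (2 * ((r:ℝ)+1))) with hC2
  set bound : ℕ → ℝ := fun n => C1 * (a n)⁻¹ + C2 * (((r:ℝ)+1) * τ r n + τ (r+1) n) with hbdef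
  have hmain : ∀ᶠ n in atTop, ‖s2 (geomPMF (a n)) r n / D n - 1‖ ≤ bound n := by
    filter_upwards [eventually_ge_atTop 1] with n hn
    have hS2 := s2_eq r n (ha n) hn
    have hErb := hSbound r n hn
    have hEr1b := hSbound (r+1) n hn
    have hDeq : D n = (((r:ℝ)+1) * (a n * r.factorial) + a n * (r+1).factorial) / r.factorial := by
      rw [hDdef]
      simp only
      rw [Nat.factorial_succ]
      push_cast
      field_simp
      ring
    have hdiff : s2 (geomPMF (a n)) r n - D n
        = (((r:ℝ)+1) * (S r n - a n * r.factorial)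
            + (S (r+1) n - a n * (r+1).factorial)) / r.factorial := by
      rw [hS2, hDeq]
      simp only [hSdef, hcdef]
      ring
    have habs : |s2 (geomPMF (a n)) r n - D n|
        ≤ ((((r:ℝ)+1) * (2*(r+2).factorial + a n * τ r n)
            + (2*(r+1+1+1).factorial + a n * τ (r+1) n))) / r.factorial := by
      rw [hdiff, abs_div, abs_of_pos hfacpos]
      gcongr
      calc |((r:ℝ)+1) * (S r n - a n * r.factorial) + (S (r+1) n - a n * (r+1).factorial)|
          ≤ |((r:ℝ)+1) * (S r n - a n * r.factorial)| + |S (r+1) n - a n * (r+1).factorial| :=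
            abs_add_le _ _
        _ = ((r:ℝ)+1) * |S r n - a n * r.factorial| + |S (r+1) n - a n * (r+1).factorial| := by
            rw [abs_mul, abs_of_pos (by positivity : (0:ℝ) < (r:ℝ)+1)]
        _ ≤ ((r:ℝ)+1) * (2*(r+2).factorial + a n * τ r n)
            + (2*(r+1+1+1).factorial + a n * τ (r+1) n) := by
            gcongr
            · refine le_trans hErb (add_le_add_left ?_ _)
              have : (r+1).factorial ≤ (r+2).factorial := Nat.factorial_le (by omega)
              have := (Nat.cast_le (α := ℝ)).mpr this
              linarith
            · refine le_trans hEr1b (add_le_add_left ?_ _)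
              have : (r+1+1).factorial ≤ (r+1+1+1).factorial := Nat.factorial_le (by omega)
              have := (Nat.cast_le (α := ℝ)).mpr this
              linarith
    have hone : s2 (geomPMF (a n)) r n / D n - 1 = (s2 (geomPMF (a n)) r n - D n) / D n := by
      rw [div_sub_one (hDpos n).ne']
    rw [Real.norm_eq_abs, hone, abs_div, abs_of_pos (hDpos n)]
    have hstep : |s2 (geomPMF (a n)) r n - D n| / D n
        ≤ (((((r:ℝ)+1) * (2*(r+2).factorial + a n * τ r n)
            + (2*(r+1+1+1).factorial + a n * τ (r+1) n))) / r.factorial) / D n :=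
      div_le_div_of_nonneg_right habs (hDpos n).le
    apply le_trans hstep
    apply le_of_eq
    rw [hbdef, hC1, hC2, hDdef]
    simp only
    have hane : a n ≠ 0 := (ha n).ne'
    field_simp
    ring
  have hb0 : Tendsto bound atTop (𝓝 0) := by
    rw [hbdef]
    have h1 : Tendsto (fun n => (a n)⁻¹) atTop (𝓝 0) := ha_top.inv_tendsto_atTop
    have h2 := (h1.const_mul C1).add
      ((((hτ0 r).const_mul ((r:ℝ)+1)).add (hτ0 (r+1))).const_mul C2)
    simpa using h2
  have hfin := squeeze_zero_norm' hmain hb0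
  have := hfin.add_const 1
  simp only [sub_add_cancel, zero_add] at this
  exact this
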